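/- Let n ≥ 7 and let p be a prime dividing |Alt(n)|. Then there exists a prime l with l ∉ {2, 3, p} and an element x of Alt(n) whose order is a power of l such that p divides the size of the conjugacy class of x in Alt(n). -/

import Mathlib

/-- `x` is a vanishing element of `G`: some irreducible complex character of `G`
(character of a simple finite-dimensional complex representation) vanishes at `x`. -/
def IsVanishing (G : Type) [Group G] (x : G) : Prop :=
  ∃ V : FDRep ℂ G, CategoryTheory.Simple V ∧ V.character x = 0

/-- The size of the conjugacy class of `x`. -/
noncomputable def classSize {G : Type*} [Group G] (x : G) : ℕ :=
  Nat.card {y : G // IsConj x y}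

/-- `x` has prime power order. -/
def HasPrimePowerOrder {G : Type*} [Group G] (x : G) : Prop :=
  ∃ p k : ℕ, p.Prime ∧ orderOf x = p ^ k


open Equiv Equiv.Perm Subgroup

section Centralizer

variable {α : Type*} [DecidableEq α] [Fintype α]

lemma exists_zpow_eq_on_support {σ c : Equiv.Perm α} (hc : c.IsCycle)
    (hcomm : σ * c = c * σ) :
    ∃ u ∈ Subgroup.zpowers c, ∀ a ∈ c.support, σ a = u a := by
  have hsc : ∀ b, σ (c b) = c (σ b) := fun b => by
    rw [← Equiv.Perm.mul_apply, hcomm, Equiv.Perm.mul_apply]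
  obtain ⟨a, ha, hcyc⟩ := hc
  have hσa : c (σ a) ≠ σ a := by
    rw [← hsc]
    simpa using ha
  obtain ⟨i, hi⟩ := hcyc hσa
  refine ⟨c ^ i, ⟨i, rfl⟩, ?_⟩
  intro b hb
  obtain ⟨m, hm⟩ := hcyc (Equiv.Perm.mem_support.mp hb)
  have hcm : σ * c ^ m = c ^ m * σ :=
    ((Commute.zpow_right (hcomm : Commute σ c) m)).symm.eq.symm
  calc σ b = σ ((c ^ m) a) := by rw [hm]
    _ = (c ^ m) (σ a) := by
        rw [← Equiv.Perm.mul_apply, hcm, Equiv.Perm.mul_apply]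
    _ = (c ^ m) ((c ^ i) a) := by rw [hi]
    _ = (c ^ i) ((c ^ m) a) := by
        rw [← Equiv.Perm.mul_apply, ← Equiv.Perm.mul_apply, ← zpow_add, ← zpow_add, add_comm]
    _ = (c ^ i) b := by rw [hm]

lemma zpowers_eq_on_support {c : Equiv.Perm α} {u v : Equiv.Perm α}
    (hu : u ∈ Subgroup.zpowers c) (hv : v ∈ Subgroup.zpowers c)
    (h : ∀ a ∈ c.support, u a = v a) : u = v := by
  obtain ⟨i, rfl⟩ := Subgroup.mem_zpowers_iff.mp hu
  obtain ⟨j, rfl⟩ := Subgroup.mem_zpowers_iff.mp hv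
  ext a
  by_cases ha : a ∈ c.support
  · exact h a ha
  · rw [Equiv.Perm.notMem_support.mp (fun hmem => ha (Equiv.Perm.support_zpow_le c i hmem)),
      Equiv.Perm.notMem_support.mp (fun hmem => ha (Equiv.Perm.support_zpow_le c j hmem))]

theorem card_centralizer_dvd (g : Equiv.Perm α) (l k : ℕ) (hl : l.Prime)
    (hg : g.cycleType = Multiset.replicate k l) :
    Nat.card (Subgroup.centralizer {g} : Subgroup (Equiv.Perm α)) ∣
      (l ^ k * (Fintype.card α - l * k).factorial) * k.factorial := by
  classical
  set C := Subgroup.centralizer ({g} : Set (Equiv.Perm α)) with hC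
  set F := g.cycleFactorsFinset with hFdef
  have hFcard : F.card = k := by
    have h2 : Multiset.card g.cycleType = k := by rw [hg, Multiset.card_replicate]
    rwa [Equiv.Perm.cycleType_def, Multiset.card_map, Finset.card_val] at h2
  have hsupportcard : g.support.card = l * k := by
    rw [← Equiv.Perm.sum_cycleType, hg, Multiset.sum_replicate, smul_eq_mul, mul_comm]
  have hmemF : ∀ c ∈ F, (c : Equiv.Perm α).IsCycle ∧ c.support.card = l := by
    intro c hc
    refine ⟨(Equiv.Perm.mem_cycleFactorsFinset_iff.mp hc).1, ?_⟩
    have h3 : c.support.card ∈ g.cycleType := by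
      rw [Equiv.Perm.cycleType_def]
      exact Multiset.mem_map_of_mem _ (Finset.mem_val.mpr hc)
    rw [hg] at h3
    exact Multiset.eq_of_mem_replicate h3
  have hconj : ∀ σ : Equiv.Perm α, σ ∈ C → ∀ c ∈ F, σ * c * σ⁻¹ ∈ F := by
    intro σ hσ c hc
    have hσ' : σ * g = g * σ := Subgroup.mem_centralizer_singleton_iff.mp hσ
    have h1 : σ * g * σ⁻¹ = g := by rw [hσ', mul_inv_cancel_right]
    have h2 := (Equiv.Perm.mem_cycleFactorsFinset_conj g σ c).mpr hc
    rwa [h1] at h2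
  let π : C →* Equiv.Perm F :=
    { toFun := fun σ =>
        { toFun := fun c => ⟨(σ : Equiv.Perm α) * c * (σ : Equiv.Perm α)⁻¹,
            hconj σ σ.2 c c.2⟩
          invFun := fun c => ⟨(σ : Equiv.Perm α)⁻¹ * c * (σ : Equiv.Perm α),
            by simpa using hconj _ (inv_mem σ.2) c c.2⟩
          left_inv := fun c => by
            apply Subtype.ext
            simp [mul_assoc]
          right_inv := fun c => by
            apply Subtype.ext
            simp [mul_assoc] }
      map_one' := by
        apply Equiv.ext
        intro c
        apply Subtype.ext
        simp
      map_mul' := fun σ τ => by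
        apply Equiv.ext
        intro c
        apply Subtype.ext
        simp [mul_assoc] }
  have h1 : Nat.card C = Nat.card π.range * Nat.card π.ker := by
    rw [Subgroup.card_eq_card_quotient_mul_card_subgroup π.ker]
    congr 1
    exact Nat.card_congr (QuotientGroup.quotientKerEquivRange π).toEquiv
  have hrange : Nat.card π.range ∣ k.factorial := by
    have h2 := Subgroup.card_subgroup_dvd_card π.range
    have h3 : Nat.card (Equiv.Perm F) = k.factorial := by
      rw [Nat.card_eq_fintype_card, Fintype.card_perm, Fintype.card_coe, hFcard]
    rwa [h3] at h2
  have hfix : ∀ (σ : C) (a : α), a ∉ g.support ↔ (σ : Equiv.Perm α) a ∉ g.support := by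
    intro σ a
    have hσ' : (σ : Equiv.Perm α) * g = g * (σ : Equiv.Perm α) :=
      Subgroup.mem_centralizer_singleton_iff.mp σ.2
    have hsc : ∀ b, (σ : Equiv.Perm α) (g b) = g ((σ : Equiv.Perm α) b) := fun b => by
      rw [← Equiv.Perm.mul_apply, hσ', Equiv.Perm.mul_apply]
    simp only [Equiv.Perm.notMem_support]
    constructor
    · intro h; rw [← hsc, h]
    · intro h
      have h7 : (σ : Equiv.Perm α) (g a) = (σ : Equiv.Perm α) a := (hsc a).trans h
      exact (σ : Equiv.Perm α).injective h7
  let res : C →* Equiv.Perm {a : α // a ∉ g.support} :=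
    { toFun := fun σ => (σ : Equiv.Perm α).subtypePerm (fun a => (hfix σ a).symm)
      map_one' := by
        apply Equiv.ext
        intro a
        apply Subtype.ext
        simp
      map_mul' := fun σ τ => by
        apply Equiv.ext
        intro a
        apply Subtype.ext
        simp
        rfl }
  have hcomm : ∀ (σ : π.ker) (c : F),
      ((σ : C) : Equiv.Perm α) * (c : Equiv.Perm α) = (c : Equiv.Perm α) * ((σ : C) : Equiv.Perm α) := by
    intro σ c
    have h2 : π (σ : C) = 1 := σ.2
    have h3 : (π (σ : C)) c = c := by rw [h2]; rfl
    have h4 : ((σ : C) : Equiv.Perm α) * (c : Equiv.Perm α) * ((σ : C) : Equiv.Perm α)⁻¹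
        = (c : Equiv.Perm α) := congrArg Subtype.val h3
    calc ((σ : C) : Equiv.Perm α) * (c : Equiv.Perm α)
        = (((σ : C) : Equiv.Perm α) * (c : Equiv.Perm α) * ((σ : C) : Equiv.Perm α)⁻¹)
          * ((σ : C) : Equiv.Perm α) := by group
      _ = (c : Equiv.Perm α) * ((σ : C) : Equiv.Perm α) := by rw [h4]
  let u : π.ker → (c : F) → Equiv.Perm α := fun σ c =>
    Classical.choose (exists_zpow_eq_on_support (hmemF c c.2).1 (hcomm σ c))
  have hu_mem : ∀ (σ : π.ker) (c : F), u σ c ∈ Subgroup.zpowers (c : Equiv.Perm α) :=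
    fun σ c => (Classical.choose_spec (exists_zpow_eq_on_support (hmemF c c.2).1 (hcomm σ c))).1
  have hu_prop : ∀ (σ : π.ker) (c : F), ∀ a ∈ (c : Equiv.Perm α).support,
      ((σ : C) : Equiv.Perm α) a = u σ c a :=
    fun σ c => (Classical.choose_spec (exists_zpow_eq_on_support (hmemF c c.2).1 (hcomm σ c))).2
  let ψ : π.ker →* ((c : F) → Subgroup.zpowers (c : Equiv.Perm α)) × Equiv.Perm {a : α // a ∉ g.support} :=
    { toFun := fun σ => (fun c => ⟨u σ c, hu_mem σ c⟩, res (σ : C))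
      map_one' := by
        refine Prod.ext ?_ ?_
        · funext c
          apply Subtype.ext
          refine zpowers_eq_on_support (hu_mem 1 c) (one_mem _) ?_
          intro a ha
          rw [← hu_prop 1 c a ha]
          rfl
        · show res 1 = 1
          exact res.map_one
      map_mul' := fun σ τ => by
        refine Prod.ext ?_ ?_
        · funext c
          apply Subtype.ext
          refine zpowers_eq_on_support (hu_mem (σ * τ) c)
            (mul_mem (hu_mem σ c) (hu_mem τ c)) ?_
          intro a ha
          have hτa : ((τ : C) : Equiv.Perm α) a ∈ (c : Equiv.Perm α).support := by
            rw [hu_prop τ c a ha]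
            obtain ⟨j, hj⟩ := Subgroup.mem_zpowers_iff.mp (hu_mem τ c)
            rw [← hj]
            exact Equiv.Perm.zpow_apply_mem_support.mpr ha
          rw [← hu_prop (σ * τ) c a ha]
          show ((σ : C) : Equiv.Perm α) (((τ : C) : Equiv.Perm α) a) = u σ c (u τ c a)
          rw [← hu_prop τ c a ha, ← hu_prop σ c _ hτa]
        · show res ((σ : C) * (τ : C)) = res (σ : C) * res (τ : C)
          exact res.map_mul _ _ }
  have hinj : Function.Injective ψ := by
    rw [injective_iff_map_eq_one]
    intro σ hσ1
    have hfst := congrArg Prod.fst hσ1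
    have hsnd := congrArg Prod.snd hσ1
    have hperm : ((σ : C) : Equiv.Perm α) = 1 := by
      ext a
      by_cases ha : a ∈ g.support
      · have hcF : g.cycleOf a ∈ F := Equiv.Perm.cycleOf_mem_cycleFactorsFinset_iff.mpr ha
        have haC : a ∈ (g.cycleOf a).support := by
          rw [Equiv.Perm.mem_support_cycleOf_iff]
          exact ⟨Equiv.Perm.SameCycle.refl g a, ha⟩
        have h5 := congrFun hfst ⟨g.cycleOf a, hcF⟩
        have h6 : u σ ⟨g.cycleOf a, hcF⟩ = 1 := congrArg Subtype.val h5
        rw [hu_prop σ ⟨g.cycleOf a, hcF⟩ a haC, h6]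
      · have h5 := congrFun (congrArg (fun (e : Equiv.Perm {a : α // a ∉ g.support}) =>
          (e : {a : α // a ∉ g.support} → {a : α // a ∉ g.support})) hsnd) ⟨a, ha⟩
        have h6 : ((σ : C) : Equiv.Perm α) a = a := congrArg Subtype.val h5
        simpa using h6
    apply Subtype.ext
    apply Subtype.ext
    exact hperm
  have hker : Nat.card π.ker ∣ l ^ k * (Fintype.card α - l * k).factorial := by
    have h2 : Nat.card π.ker = Nat.card ψ.range :=
      Nat.card_congr (MonoidHom.ofInjective hinj).toEquiv
    have h3 := Subgroup.card_subgroup_dvd_card ψ.range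
    have h4 : Nat.card (((c : F) → Subgroup.zpowers (c : Equiv.Perm α)) ×
        Equiv.Perm {a : α // a ∉ g.support}) = l ^ k * (Fintype.card α - l * k).factorial := by
      rw [Nat.card_prod, Nat.card_pi]
      congr 1
      · calc ∏ c : F, Nat.card (Subgroup.zpowers (c : Equiv.Perm α))
            = ∏ _c : F, l := Finset.prod_congr rfl (fun c _ => by
              rw [Nat.card_zpowers, (hmemF c c.2).1.orderOf, (hmemF c c.2).2])
          _ = l ^ k := by rw [Finset.prod_const, Finset.card_univ, Fintype.card_coe, hFcard]
      · rw [Nat.card_eq_fintype_card, Fintype.card_perm]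
        congr 1
        rw [Fintype.card_subtype_compl, ← hsupportcard]
        congr 1
        exact Fintype.card_coe g.support
    rw [h2, ← h4]
    exact h3
  rw [h1]
  calc Nat.card π.range * Nat.card π.ker
      ∣ k.factorial * (l ^ k * (Fintype.card α - l * k).factorial) :=
        mul_dvd_mul hrange hker
    _ = (l ^ k * (Fintype.card α - l * k).factorial) * k.factorial := mul_comm _ _

end Centralizer

section Build

lemma exists_good_elt (n l k : ℕ) (hn : 2 ≤ n) (hl : l.Prime) (hlodd : Odd l)
    (hk : 1 ≤ k) (hkl : l * k ≤ n) :
    ∃ x : alternatingGroup (Fin n), orderOf x = l ∧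
      ∃ c : ℕ, c ∣ (l ^ k * (n - l * k).factorial) * k.factorial ∧
        Nat.card {y : alternatingGroup (Fin n) // IsConj x y} * (2 * c) = n.factorial := by
  classical
  haveI : Nontrivial (Fin n) := by
    rcases n with _ | _ | n
    · omega
    · omega
    · infer_instance
  obtain ⟨g, hg⟩ : ∃ g : Equiv.Perm (Fin n), g.cycleType = Multiset.replicate k l := by
    rw [Equiv.Perm.exists_with_cycleType_iff]
    constructor
    · rw [Multiset.sum_replicate, smul_eq_mul, Fintype.card_fin, mul_comm]
      exact hkl
    · intro a ha
      rw [Multiset.eq_of_mem_replicate ha]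
      exact hl.two_le
  have hsign : g ∈ alternatingGroup (Fin n) := by
    rw [Equiv.Perm.mem_alternatingGroup, Equiv.Perm.sign_of_cycleType, hg,
      Multiset.sum_replicate, Multiset.card_replicate, smul_eq_mul]
    apply Even.neg_one_pow
    obtain ⟨m, hm⟩ := hlodd
    exact ⟨k * m + k, by rw [hm]; ring⟩
  set A := alternatingGroup (Fin n) with hA
  set x : A := ⟨g, hsign⟩ with hx
  have horder : orderOf x = l := by
    rw [Subgroup.orderOf_mk, ← Equiv.Perm.lcm_cycleType, hg]
    refine Nat.dvd_antisymm (Multiset.lcm_dvd.mpr ?_) (Multiset.dvd_lcm ?_)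
    · intro b hb
      rw [Multiset.eq_of_mem_replicate hb]
    · exact Multiset.mem_replicate.mpr ⟨by omega, rfl⟩
  refine ⟨x, horder, ?_⟩
  -- conjugacy class ↔ orbit
  have e1 : {y : A // IsConj x y} ≃ MulAction.orbit (ConjAct A) x :=
    Equiv.subtypeEquivRight fun y => isConj_comm.trans ConjAct.mem_orbit_conjAct.symm
  have e2 := MulAction.orbitProdStabilizerEquivGroup (ConjAct A) x
  have hcard1 : Nat.card {y : A // IsConj x y} *
      Nat.card (MulAction.stabilizer (ConjAct A) x) = Nat.card A := by
    rw [Nat.card_congr e1, ← Nat.card_prod, Nat.card_congr e2]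
    rfl
  -- stabilizer embeds into the centralizer of g in Perm (Fin n)
  let j : MulAction.stabilizer (ConjAct A) x →* Equiv.Perm (Fin n) :=
    (A.subtype.comp (ConjAct.ofConjAct (G := A)).toMonoidHom).comp
      (MulAction.stabilizer (ConjAct A) x).subtype
  have hjinj : Function.Injective j :=
    A.subtype_injective.comp ((ConjAct.ofConjAct (G := A)).injective.comp
      (MulAction.stabilizer (ConjAct A) x).subtype_injective)
  have hjrange : ∀ σ, j σ ∈ Subgroup.centralizer ({g} : Set (Equiv.Perm (Fin n))) := by
    intro σ
    have hσ : (σ : ConjAct A) • x = x := σ.2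
    rw [ConjAct.smul_def] at hσ
    have hval : ((ConjAct.ofConjAct (σ : ConjAct A) : A) : Equiv.Perm (Fin n)) * g *
        ((ConjAct.ofConjAct (σ : ConjAct A) : A) : Equiv.Perm (Fin n))⁻¹ = g := by
      have := congrArg (Subtype.val : A → Equiv.Perm (Fin n)) hσ
      simpa using this
    rw [Subgroup.mem_centralizer_singleton_iff]
    show ((ConjAct.ofConjAct (σ : ConjAct A) : A) : Equiv.Perm (Fin n)) * g =
      g * ((ConjAct.ofConjAct (σ : ConjAct A) : A) : Equiv.Perm (Fin n))
    calc ((ConjAct.ofConjAct (σ : ConjAct A) : A) : Equiv.Perm (Fin n)) * g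
        = (((ConjAct.ofConjAct (σ : ConjAct A) : A) : Equiv.Perm (Fin n)) * g *
            ((ConjAct.ofConjAct (σ : ConjAct A) : A) : Equiv.Perm (Fin n))⁻¹) *
            ((ConjAct.ofConjAct (σ : ConjAct A) : A) : Equiv.Perm (Fin n)) := by group
      _ = g * ((ConjAct.ofConjAct (σ : ConjAct A) : A) : Equiv.Perm (Fin n)) := by rw [hval]
  let j' : MulAction.stabilizer (ConjAct A) x →*
      Subgroup.centralizer ({g} : Set (Equiv.Perm (Fin n))) :=
    j.codRestrict _ hjrange
  have hj'inj : Function.Injective j' :=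
    (MonoidHom.injective_codRestrict j _ hjrange).mpr hjinj
  have hstabdvd : Nat.card (MulAction.stabilizer (ConjAct A) x) ∣
      Nat.card (Subgroup.centralizer ({g} : Set (Equiv.Perm (Fin n)))) := by
    have h2 : Nat.card (MulAction.stabilizer (ConjAct A) x) = Nat.card j'.range :=
      Nat.card_congr (MonoidHom.ofInjective hj'inj).toEquiv
    rw [h2]
    exact Subgroup.card_subgroup_dvd_card j'.range
  have hcent := card_centralizer_dvd g l k hl hg
  rw [Fintype.card_fin] at hcent
  refine ⟨Nat.card (MulAction.stabilizer (ConjAct A) x), hstabdvd.trans hcent, ?_⟩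
  have hA2 : 2 * Nat.card A = n.factorial := by
    rw [Nat.card_eq_fintype_card, two_mul_card_alternatingGroup, Fintype.card_perm,
      Fintype.card_fin]
  calc Nat.card {y : A // IsConj x y} * (2 * Nat.card (MulAction.stabilizer (ConjAct A) x))
      = 2 * (Nat.card {y : A // IsConj x y} *
          Nat.card (MulAction.stabilizer (ConjAct A) x)) := by ring
    _ = 2 * Nat.card A := by rw [hcard1]
    _ = n.factorial := hA2

end Build

section NT

lemma fact_factorization_ge {p : ℕ} (hp : p.Prime) {m n s : ℕ} (hmn : m ≤ n)
    (hs : m / p + s ≤ n / p) :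
    (m.factorial).factorization p + s ≤ (n.factorial).factorization p := by
  haveI := Fact.mk hp
  set b := Nat.log p n + 1 with hb
  have hmb : Nat.log p m < b := lt_of_le_of_lt (Nat.log_mono_right hmn) (Nat.lt_succ_self _)
  have hnb : Nat.log p n < b := Nat.lt_succ_self _
  rw [Nat.factorization_def _ hp, Nat.factorization_def _ hp,
    padicValNat_factorial hmb, padicValNat_factorial hnb]
  by_cases h1b : 1 < b
  · have hmem : (1 : ℕ) ∈ Finset.Ico 1 b := Finset.mem_Ico.mpr ⟨le_rfl, h1b⟩
    rw [← Finset.sum_erase_add _ _ hmem, ← Finset.sum_erase_add _ _ hmem]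
    have hA : ∑ i ∈ (Finset.Ico 1 b).erase 1, m / p ^ i ≤
        ∑ i ∈ (Finset.Ico 1 b).erase 1, n / p ^ i :=
      Finset.sum_le_sum fun i _ => Nat.div_le_div_right hmn
    have hB : m / p ^ 1 + s ≤ n / p ^ 1 := by simpa [pow_one] using hs
    omega
  · have hb1 : b = 1 := by omega
    have hnp : n < p := by
      have hlog : Nat.log p n = 0 := by omega
      have := hp.two_le
      rcases Nat.log_eq_zero_iff.mp hlog with h | h
      · exact h
      · omega
    have hnp0 : n / p = 0 := Nat.div_eq_of_lt hnp
    rw [hnp0] at hs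
    rw [hb1]
    simp only [Finset.Ico_self, Finset.sum_empty]
    show 0 + s ≤ 0
    rw [Nat.zero_add]
    exact le_trans (Nat.le_add_left s (m / p)) hs

lemma hval_of (p n l k : ℕ) (hp : p.Prime) (hl0 : 0 < l) (hkl : l * k ≤ n)
    (hgap : (n - l * k) / p + ((2 * (l ^ k * k.factorial)).factorization p + 1) ≤ n / p) :
    (2 * ((l ^ k * (n - l * k).factorial) * k.factorial)).factorization p
        < (n.factorial).factorization p := by
  have hl0' : l ≠ 0 := hl0.ne'
  have e : 2 * ((l ^ k * (n - l * k).factorial) * k.factorial)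
      = (2 * (l ^ k * k.factorial)) * (n - l * k).factorial := by ring
  have hA : (2 * ((l ^ k * (n - l * k).factorial) * k.factorial)).factorization p
      = (2 * (l ^ k * k.factorial)).factorization p +
        ((n - l * k).factorial).factorization p := by
    rw [e, Nat.factorization_mul (by positivity) (Nat.factorial_ne_zero _)]
    simp
  rw [hA]
  have := fact_factorization_ge hp (Nat.sub_le n (l * k)) hgap
  omega

lemma crux (n p l k : ℕ) (hn : 2 ≤ n) (hp : p.Prime) (hl : l.Prime) (hlodd : Odd l)
    (hk : 1 ≤ k) (hkl : l * k ≤ n)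
    (hval : (2 * ((l ^ k * (n - l * k).factorial) * k.factorial)).factorization p
        < (n.factorial).factorization p) :
    ∃ x : alternatingGroup (Fin n), orderOf x = l ∧
      p ∣ Nat.card {y : alternatingGroup (Fin n) // IsConj x y} := by
  obtain ⟨x, hx, c, hcdvd, hceq⟩ := exists_good_elt n l k hn hl hlodd hk hkl
  refine ⟨x, hx, ?_⟩
  by_contra hpc
  have hfne : n.factorial ≠ 0 := Nat.factorial_ne_zero n
  set cs := Nat.card {y : alternatingGroup (Fin n) // IsConj x y} with hcs
  have hcs0 : cs ≠ 0 := by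
    intro h
    rw [h, zero_mul] at hceq
    exact hfne hceq.symm
  have hc0 : 2 * c ≠ 0 := by
    intro h
    rw [h, mul_zero] at hceq
    exact hfne hceq.symm
  have hE0 : (2 * ((l ^ k * (n - l * k).factorial) * k.factorial)) ≠ 0 := by
    have : l ≠ 0 := hl.ne_zero
    positivity
  have h2c : 2 * c ∣ 2 * ((l ^ k * (n - l * k).factorial) * k.factorial) :=
    Nat.mul_dvd_mul_left 2 hcdvd
  have hv1 : (n.factorial).factorization p = cs.factorization p + (2 * c).factorization p := by
    rw [← hceq, Nat.factorization_mul hcs0 hc0]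
    simp
  have hcsz : cs.factorization p = 0 := Nat.factorization_eq_zero_of_not_dvd hpc
  have hle : (2 * c).factorization p ≤
      (2 * ((l ^ k * (n - l * k).factorial) * k.factorial)).factorization p := by
    have hmono := (Nat.factorization_le_iff_dvd hc0 hE0).mpr h2c
    exact hmono p
  omega

end NT



theorem stmt_10 (n p : ℕ) (hn : 7 ≤ n) (hp : p.Prime)
    (hpd : p ∣ Nat.card (alternatingGroup (Fin n))) :
    ∃ l : ℕ, l.Prime ∧ l ≠ 2 ∧ l ≠ 3 ∧ l ≠ p ∧
      ∃ x : alternatingGroup (Fin n), (∃ m : ℕ, orderOf x = l ^ m) ∧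
        p ∣ classSize x := by
  classical
  have hA2 : 2 * Nat.card (alternatingGroup (Fin n)) = n.factorial := by
    haveI : Nontrivial (Fin n) := by
      rcases n with _ | _ | n
      · omega
      · omega
      · infer_instance
    rw [Nat.card_eq_fintype_card, two_mul_card_alternatingGroup, Fintype.card_perm,
      Fintype.card_fin]
  have hpn : p ≤ n := by
    have h1 : p ∣ n.factorial := hpd.trans ⟨2, by omega⟩
    exact (Nat.Prime.dvd_factorial hp).mp h1
  by_cases hp2 : p = 2
  · -- l = 5, k = 1
    have hv : ((2 : ℕ) * (5 ^ 1 * Nat.factorial 1)).factorization 2 = 1 := by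
      norm_num
      rw [show (10 : ℕ) = 2 * 5 by norm_num,
        Nat.factorization_mul two_ne_zero (by norm_num)]
      simp [Nat.Prime.factorization_self Nat.prime_two,
        Nat.factorization_eq_zero_of_not_dvd (by norm_num : ¬ (2 : ℕ) ∣ 5)]
    obtain ⟨x, hx, hdvd⟩ := crux n p 5 1 (by omega) hp (by norm_num) (by decide)
      le_rfl (by omega) (by
        apply hval_of p n 5 1 hp (by norm_num) (by omega)
        rw [hp2, hv]
        omega)
    exact ⟨5, by norm_num, by norm_num, by norm_num, by omega, x,
      ⟨1, by rw [hx, pow_one]⟩, hdvd⟩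
  · by_cases hp3 : p = 3
    · have hv : ((2 : ℕ) * (5 ^ 1 * Nat.factorial 1)).factorization 3 = 0 := by
        norm_num
        exact Nat.factorization_eq_zero_of_not_dvd (by norm_num)
      obtain ⟨x, hx, hdvd⟩ := crux n p 5 1 (by omega) hp (by norm_num) (by decide)
        le_rfl (by omega) (by
          apply hval_of p n 5 1 hp (by norm_num) (by omega)
          rw [hp3, hv]
          omega)
      exact ⟨5, by norm_num, by norm_num, by norm_num, by omega, x,
        ⟨1, by rw [hx, pow_one]⟩, hdvd⟩
    · by_cases hp5 : p = 5
      · -- l = 7, k = 1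
        have hv : ((2 : ℕ) * (7 ^ 1 * Nat.factorial 1)).factorization 5 = 0 := by
          norm_num
          exact Nat.factorization_eq_zero_of_not_dvd (by norm_num)
        obtain ⟨x, hx, hdvd⟩ := crux n p 7 1 (by omega) hp (by norm_num) (by decide)
          le_rfl (by omega) (by
            apply hval_of p n 7 1 hp (by norm_num) (by omega)
            rw [hp5, hv]
            omega)
        exact ⟨7, by norm_num, by norm_num, by norm_num, by omega, x,
          ⟨1, by rw [hx, pow_one]⟩, hdvd⟩
      · -- p ≥ 7, l = 5, k = n % p / 5 + 1
        have hp7 : 7 ≤ p := by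
          have h2 := hp.two_le
          by_contra hlt
          interval_cases p <;> simp_all (config := { decide := true })
        set k := n % p / 5 + 1 with hk
        have hppos := hp.pos
        have hdm := Nat.div_add_mod n p
        have hq1 : 1 ≤ n / p := (Nat.one_le_div_iff hppos).mpr hpn
        have hr : n % p < p := Nat.mod_lt n hppos
        have hrk : n % p < 5 * k := by omega
        have hkp : k < p := by omega
        have hpmul : p * 1 ≤ p * (n / p) := Nat.mul_le_mul_left p hq1
        have h5k : 5 * k ≤ n := by omega
        have hcomm : (n / p) * p = p * (n / p) := mul_comm _ _
        have hlt : n - 5 * k < (n / p) * p := by omega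
        have hdivlt : (n - 5 * k) / p < n / p := (Nat.div_lt_iff_lt_mul hppos).mpr hlt
        have hv : ((2 : ℕ) * (5 ^ k * k.factorial)).factorization p = 0 := by
          apply Nat.factorization_eq_zero_of_not_dvd
          intro hdvd'
          rcases (Nat.Prime.dvd_mul hp).mp hdvd' with h | h
          · have := Nat.le_of_dvd two_pos h
            omega
          · rcases (Nat.Prime.dvd_mul hp).mp h with h2 | h2
            · have := Nat.le_of_dvd (by norm_num) (hp.dvd_of_dvd_pow h2)
              omega
            · have := (Nat.Prime.dvd_factorial hp).mp h2
              omega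
        obtain ⟨x, hx, hdvd⟩ := crux n p 5 k (by omega) hp (by norm_num) (by decide)
          (by omega) (by omega) (by
            apply hval_of p n 5 k hp (by norm_num) (by omega)
            rw [hv]
            omega)
        exact ⟨5, by norm_num, by norm_num, by norm_num, by omega, x,
          ⟨1, by rw [hx, pow_one]⟩, hdvd⟩
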